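/- Let M be a matroid with rank function r, and let C₁, C₂ be distinct circuits of M. Then C₁ and C₂ form a modular pair if and only if r(C₁ ∪ C₂) = |C₁ ∪ C₂| - 2. -/

import Mathlib

open Set

variable {α : Type*}

/-- A circuit of a matroid: a minimal dependent set. -/
def Matroid.IsCircuitDef (M : Matroid α) (C : Set α) : Prop :=
  M.Dep C ∧ ∀ D, D ⊂ C → ¬ M.Dep D

/-- The rank (in `ℕ∞`) of a set in a matroid: the supremum of the cardinalities
of independent subsets. -/
noncomputable def Matroid.rk' (M : Matroid α) (X : Set α) : ℕ∞ :=
  ⨆ I : {I : Set α // M.Indep I ∧ I ⊆ X}, (I : Set α).encard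

namespace Matroid

variable {M : Matroid α} {I J X C D C₁ C₂ D₁ D₂ : Set α}

lemma IsCircuitDef.dep (h : M.IsCircuitDef C) : M.Dep C := h.1

lemma IsCircuitDef.ssubset_indep (h : M.IsCircuitDef C) (hD : D ⊂ C) : M.Indep D :=
  indep_of_not_dep (h.2 D hD) (hD.subset.trans h.1.subset_ground)

lemma IsCircuitDef.not_subset (h1 : M.IsCircuitDef C₁) (h2 : M.IsCircuitDef C₂) (hne : C₁ ≠ C₂) :
    ¬ C₁ ⊆ C₂ := fun hss =>
  (h2.ssubset_indep (hss.ssubset_of_ne hne)).not_dep h1.dep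

lemma IsCircuitDef.not_subset_indep (h : M.IsCircuitDef C) (hI : M.Indep I) : ¬ C ⊆ I :=
  fun hss => (hI.subset hss).not_dep h.dep

lemma rk'_eq_encard_of_basis (hI : M.IsBasis I X) : M.rk' X = I.encard := by
  refine le_antisymm (iSup_le ?_) ?_
  · rintro ⟨J, hJ, hJX⟩
    obtain ⟨J', hJ', hJJ'⟩ := hJ.subset_isBasis_of_subset hJX hI.subset_ground
    exact (encard_mono hJJ').trans_eq (hJ'.encard_eq_encard hI)
  · exact le_iSup (fun I : {I : Set α // M.Indep I ∧ I ⊆ X} => (I : Set α).encard)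
      ⟨I, hI.indep, hI.subset⟩

/-- T1: restriction of a bigger basis to the smaller set. -/
lemma basis_inter_eq (hI : M.IsBasis I X) (hI' : M.IsBasis J C) (hXC : C ⊆ X) (hII' : J ⊆ I) :
    I ∩ C = J :=
  (hI'.eq_of_subset_indep (hI.indep.inter_right C) (subset_inter hII' hI'.subset)
    inter_subset_right).symm

/-- T2: a basis of a circuit misses exactly one element. -/
lemma IsCircuitDef.exists_basis_diff (hC : M.IsCircuitDef C) (hI : M.IsBasis I C) :
    ∃ e ∈ C, e ∉ I ∧ I = C \ {e} := by
  obtain ⟨e, heC, heI⟩ := exists_of_ssubset (hI.subset.ssubset_of_ne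
    (fun h => (h ▸ hI.indep).not_dep hC.dep))
  have hind : M.Indep (C \ {e}) :=
    hC.ssubset_indep (sdiff_singleton_ssubset.mpr heC)
  have : I = C \ {e} :=
    hI.eq_of_subset_indep hind (subset_diff_singleton hI.subset heI) diff_subset
  exact ⟨e, heC, heI, this⟩

/-- T5: a finite dependent set contains a circuit. -/
lemma exists_circuit_subset_aux (n : ℕ) :
    ∀ D : Set α, D.Finite → D.ncard ≤ n → M.Dep D → ∃ C ⊆ D, M.IsCircuitDef C := by
  induction n with
  | zero =>
    intro D hfin hcard hD
    rw [Nat.le_zero, ncard_eq_zero hfin] at hcard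
    exact absurd (hcard ▸ hD.nonempty) (Set.not_nonempty_empty)
  | succ n ih =>
    intro D hfin hcard hD
    by_cases h : ∀ D', D' ⊂ D → ¬ M.Dep D'
    · exact ⟨D, subset_rfl, hD, h⟩
    push_neg at h
    obtain ⟨D', hD'D, hD'⟩ := h
    obtain ⟨C, hCD', hC⟩ := ih D' (hfin.subset hD'D.subset)
      (by have := ncard_lt_ncard hD'D hfin; omega) hD'
    exact ⟨C, hCD'.trans hD'D.subset, hC⟩

lemma Dep.exists_circuit_subset (hD : M.Dep D) (hfin : D.Finite) : ∃ C ⊆ D, M.IsCircuitDef C :=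
  exists_circuit_subset_aux D.ncard D hfin le_rfl hD

/-- fundamental circuit -/
lemma exists_fund_circuit (hI : M.IsBasis I X) (hE : M.E.Finite) {e : α} (he : e ∈ X \ I) :
    ∃ C, M.IsCircuitDef C ∧ e ∈ C ∧ C ⊆ insert e I := by
  have hdep : M.Dep (insert e I) := hI.insert_dep he
  obtain ⟨C, hCsub, hC⟩ := hdep.exists_circuit_subset (hE.subset hdep.subset_ground)
  refine ⟨C, hC, ?_, hCsub⟩
  by_contra heC
  exact hC.not_subset_indep hI.indep (fun x hx => ((hCsub hx).resolve_left
    (fun h => heC (h ▸ hx))))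

/-- nullity is independent of the basis chosen (finite case). -/
lemma nullity_basis_eq (hI : M.IsBasis I X) (hJ : M.IsBasis J X) (hfin : X.Finite) :
    (X \ I).ncard = (X \ J).ncard := by
  have h1 : I.ncard = J.ncard := by
    have := hI.encard_eq_encard hJ
    rwa [← (hfin.subset hI.subset).cast_ncard_eq, ← (hfin.subset hJ.subset).cast_ncard_eq,
      Nat.cast_inj] at this
  rw [ncard_diff hI.subset (hfin.subset hI.subset),
    ncard_diff hJ.subset (hfin.subset hJ.subset), h1]

/-- Fact A: every basis of the union of two distinct circuits misses ≥ 2 elements. -/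
lemma two_le_nullity (h1 : M.IsCircuitDef D₁) (h2 : M.IsCircuitDef D₂) (hne : D₁ ≠ D₂)
    (hJ : M.IsBasis J (D₁ ∪ D₂)) (hfin : (D₁ ∪ D₂).Finite) : 2 ≤ ((D₁ ∪ D₂) \ J).ncard := by
  -- construct a good basis J₀
  have hD12 : M.Indep (D₁ ∩ D₂) := h1.ssubset_indep
    (inter_subset_left.ssubset_of_ne (fun h => h1.not_subset h2 hne
      (by rw [← h]; exact inter_subset_right)))
  obtain ⟨K, hK, hKsub⟩ := hD12.subset_isBasis_of_subset inter_subset_left h1.dep.subset_ground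
  obtain ⟨e, heD₁, heK, hKeq⟩ := h1.exists_basis_diff hK
  have heD₂ : e ∉ D₂ := fun h => heK (hKsub ⟨heD₁, h⟩)
  obtain ⟨J₀, hJ₀, hKJ₀⟩ := hK.indep.subset_isBasis_of_subset
    (hK.subset.trans subset_union_left) (union_subset h1.dep.subset_ground h2.dep.subset_ground)
  have hJ₀D₁ : J₀ ∩ D₁ = K := basis_inter_eq hJ₀ hK subset_union_left hKJ₀
  have heJ₀ : e ∉ J₀ := fun h => heK (hJ₀D₁ ▸ ⟨h, heD₁⟩)
  obtain ⟨f, hfD₂, hfJ₀⟩ := exists_of_ssubset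
    ((inter_subset_left (s := D₂) (t := J₀)).ssubset_of_ne
      (fun h => h2.not_subset_indep hJ₀.indep (by rw [← h]; exact inter_subset_right)))
  have hfJ₀' : f ∉ J₀ := fun h => hfJ₀ ⟨hfD₂, h⟩
  have hef : e ≠ f := fun h => heD₂ (h ▸ hfD₂)
  have hsub : ({e, f} : Set α) ⊆ (D₁ ∪ D₂) \ J₀ := by
    rintro x (rfl | rfl)
    · exact ⟨Or.inl heD₁, heJ₀⟩
    · exact ⟨Or.inr hfD₂, hfJ₀'⟩
  have h2le : 2 ≤ ((D₁ ∪ D₂) \ J₀).ncard := by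
    rw [← ncard_pair hef]
    exact ncard_le_ncard hsub hfin.diff
  rwa [nullity_basis_eq hJ hJ₀ hfin]
  
/-- If the union of two distinct circuits is properly inside X (which also contains
a circuit C not inside that union), then every basis of X misses ≥ 3 elements. -/
lemma three_le_nullity (hE : M.E.Finite) (h1 : M.IsCircuitDef D₁) (h2 : M.IsCircuitDef D₂)
    (hne : D₁ ≠ D₂) (hC : M.IsCircuitDef C) (hCY : ¬ C ⊆ D₁ ∪ D₂)
    (hYX : D₁ ∪ D₂ ⊆ X) (hCX : C ⊆ X) (hXE : X ⊆ M.E) (hI : M.IsBasis I X) :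
    3 ≤ (X \ I).ncard := by
  set Y := D₁ ∪ D₂ with hY
  have hYE : Y ⊆ M.E := (hYX.trans hXE)
  have hXfin : X.Finite := hE.subset hXE
  have hCYind : M.Indep (C ∩ Y) := hC.ssubset_indep
    (inter_subset_left.ssubset_of_ne (fun h => hCY (by rw [← h]; exact inter_subset_right)))
  obtain ⟨J, hJ, hJsub⟩ := hCYind.subset_isBasis_of_subset inter_subset_right hYE
  have h2J : 2 ≤ (Y \ J).ncard := two_le_nullity h1 h2 hne hJ (hXfin.subset hYX)
  obtain ⟨y₁, y₂, hy₁, hy₂, hy12⟩ := (one_lt_ncard_iff (s := Y \ J)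
    (hXfin.subset hYX).diff).mp (by omega)
  -- extend J to basis I₁ of Z = Y ∪ C
  have hZX : Y ∪ C ⊆ X := union_subset hYX hCX
  obtain ⟨I₁, hI₁, hJI₁⟩ := hJ.indep.subset_isBasis_of_subset
    (hJ.subset.trans subset_union_left) (hZX.trans hXE)
  have hI₁Y : I₁ ∩ Y = J := basis_inter_eq hI₁ hJ subset_union_left hJI₁
  have hy₁I : y₁ ∉ I₁ := fun h => hy₁.2 (hI₁Y ▸ ⟨h, hy₁.1⟩)
  have hy₂I : y₂ ∉ I₁ := fun h => hy₂.2 (hI₁Y ▸ ⟨h, hy₂.1⟩)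
  obtain ⟨e, heC, heI₁⟩ := exists_of_ssubset
    ((inter_subset_left (s := C) (t := I₁)).ssubset_of_ne
      (fun h => hC.not_subset_indep hI₁.indep (by rw [← h]; exact inter_subset_right)))
  have heI₁' : e ∉ I₁ := fun h => heI₁ ⟨heC, h⟩
  have heY : e ∉ Y := fun h => heI₁' (hJI₁ (hJsub ⟨heC, h⟩))
  have hey₁ : e ≠ y₁ := fun h => heY (h ▸ hy₁.1)
  have hey₂ : e ≠ y₂ := fun h => heY (h ▸ hy₂.1)
  have hsub3 : ({e, y₁, y₂} : Set α) ⊆ (Y ∪ C) \ I₁ := by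
    rintro x (rfl | rfl | rfl)
    · exact ⟨Or.inr heC, heI₁'⟩
    · exact ⟨Or.inl hy₁.1, hy₁I⟩
    · exact ⟨Or.inl hy₂.1, hy₂I⟩
  have h3 : 3 ≤ ((Y ∪ C) \ I₁).ncard := by
    have : ({e, y₁, y₂} : Set α).ncard = 3 := by
      rw [ncard_insert_of_notMem (by simp [hey₁, hey₂]) (by simp), ncard_pair hy12]
    rw [← this]
    exact ncard_le_ncard hsub3 (hXfin.subset hZX).diff
  -- extend I₁ to a basis I₂ of X
  obtain ⟨I₂, hI₂, hI₁I₂⟩ := hI₁.indep.subset_isBasis_of_subset (hI₁.subset.trans hZX) hXE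
  have hI₂Z : I₂ ∩ (Y ∪ C) = I₁ := basis_inter_eq hI₂ hI₁ hZX hI₁I₂
  have hmono : (Y ∪ C) \ I₁ ⊆ X \ I₂ := by
    rintro x ⟨hx1, hx2⟩
    exact ⟨hZX hx1, fun h => hx2 (hI₂Z ▸ ⟨h, hx1⟩)⟩
  have h3' : 3 ≤ (X \ I₂).ncard := h3.trans (ncard_le_ncard hmono hXfin.diff)
  rwa [nullity_basis_eq hI hI₂ hXfin]

end Matroid

/-- Two distinct circuits `C₁, C₂` form a modular pair if `C₁ ∪ C₂` does not
properly contain the union of two distinct circuits of `M`. -/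
def Matroid.ModularPairOfCircuits (M : Matroid α) (C₁ C₂ : Set α) : Prop :=
  C₁ ≠ C₂ ∧ ∀ D₁ D₂, M.IsCircuitDef D₁ → M.IsCircuitDef D₂ → D₁ ≠ D₂ →
    ¬ (D₁ ∪ D₂ ⊂ C₁ ∪ C₂)

/-- Distinct circuits `C₁, C₂` of a matroid form a modular pair iff
`r(C₁ ∪ C₂) = |C₁ ∪ C₂| - 2`. -/
theorem modularPair_iff_rank_card (M : Matroid α) (hE : M.E.Finite) (C₁ C₂ : Set α)
    (h₁ : M.IsCircuitDef C₁) (h₂ : M.IsCircuitDef C₂) (hne : C₁ ≠ C₂) :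
    M.ModularPairOfCircuits C₁ C₂ ↔
      M.rk' (C₁ ∪ C₂) = (C₁ ∪ C₂).encard - 2 := by
  have hXE : C₁ ∪ C₂ ⊆ M.E := union_subset h₁.dep.subset_ground h₂.dep.subset_ground
  have hXfin : (C₁ ∪ C₂).Finite := hE.subset hXE
  obtain ⟨I, hI⟩ := M.exists_isBasis (C₁ ∪ C₂) hXE
  have hIfin : I.Finite := hXfin.subset hI.subset
  have hnull : 2 ≤ ((C₁ ∪ C₂) \ I).ncard := Matroid.two_le_nullity h₁ h₂ hne hI hXfin
  have hadd : ((C₁ ∪ C₂) \ I).ncard + I.ncard = (C₁ ∪ C₂).ncard :=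
    ncard_diff_add_ncard_of_subset hI.subset hXfin
  have key : (M.rk' (C₁ ∪ C₂) = (C₁ ∪ C₂).encard - 2) ↔ ((C₁ ∪ C₂) \ I).ncard = 2 := by
    rw [Matroid.rk'_eq_encard_of_basis hI, ← hIfin.cast_ncard_eq, ← hXfin.cast_ncard_eq,
      show (2 : ℕ∞) = ((2 : ℕ) : ℕ∞) from rfl, ← ENat.coe_sub, Nat.cast_inj]
    omega
  rw [key]
  constructor
  · intro hmp
    by_contra hk
    have h3 : 3 ≤ ((C₁ ∪ C₂) \ I).ncard := by omega
    obtain ⟨t, hts, ht3⟩ := exists_subset_card_eq h3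
    obtain ⟨e, f, g, hef, heg, hfg, rfl⟩ := ncard_eq_three.mp ht3
    have he : e ∈ (C₁ ∪ C₂) \ I := hts (by simp)
    have hf : f ∈ (C₁ ∪ C₂) \ I := hts (by simp)
    have hg : g ∈ (C₁ ∪ C₂) \ I := hts (by simp)
    obtain ⟨De, hDe, heDe, hDesub⟩ := Matroid.exists_fund_circuit hI hE he
    obtain ⟨Df, hDf, hfDf, hDfsub⟩ := Matroid.exists_fund_circuit hI hE hf
    have hDne : De ≠ Df := by
      rintro rfl
      rcases hDesub hfDf with h | h
      · exact hef h.symm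
      · exact hf.2 h
    refine hmp.2 De Df hDe hDf hDne ⟨?_, fun hsup => ?_⟩
    · exact union_subset (hDesub.trans (insert_subset he.1 (hI.subset)))
        (hDfsub.trans (insert_subset hf.1 (hI.subset)))
    · rcases hsup hg.1 with h | h
      · rcases hDesub h with h' | h'
        · exact heg h'.symm
        · exact hg.2 h'
      · rcases hDfsub h with h' | h'
        · exact hfg h'.symm
        · exact hg.2 h'
  · intro hk
    refine ⟨hne, fun D₁ D₂ hD₁ hD₂ hDne hss => ?_⟩
    obtain ⟨x, hxX, hxY⟩ := exists_of_ssubset hss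
    have h3 : 3 ≤ ((C₁ ∪ C₂) \ I).ncard := by
      rcases hxX with hx | hx
      · exact Matroid.three_le_nullity hE hD₁ hD₂ hDne h₁ (fun h => hxY (h hx))
          hss.subset subset_union_left hXE hI
      · exact Matroid.three_le_nullity hE hD₁ hD₂ hDne h₂ (fun h => hxY (h hx))
          hss.subset subset_union_right hXE hI
    omega
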